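/- arXiv:1506.06301 — 9 statements merged into one kernel-verified Lean document; each statement's English description precedes it below -/
import Mathlib

section
/- Let g ≥ 1, let q₁,…,q_g ∈ ℂ be pairwise distinct, and let u₁,…,u_{2g−1} ∈ ℂ satisfy q_j ≠ u_l for all j and l. Then Σ_{j=1}^g [∏_{l=1}^{2g−1}(q_j − u_l) / ∏_{α≠j}(q_j − q_α)²] · [Σ_{l=1}^{2g−1} 1/(q_j − u_l) − 2·Σ_{m≠j} 1/(q_j − q_m)] = 1. (This is the residue identity, for the rational differential ∏_{s≠n,k}(u − u_s)du/∏_{m=1}^g (u − q_m)², which completes the proof of the Schlesinger equations for the diagonal entries.) -/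
open Finset Polynomial

private lemma sq_dvd_of_eval_eq_zero (f : ℂ[X]) (a : ℂ)
    (h0 : f.eval a = 0) (h1 : f.derivative.eval a = 0) :
    (X - C a) ^ 2 ∣ f := by
  obtain ⟨p, rfl⟩ := (dvd_iff_isRoot (p := f)).2 h0
  have hp : p.eval a = 0 := by
    simpa [derivative_mul] using h1
  obtain ⟨r, rfl⟩ := (dvd_iff_isRoot (p := p)).2 hp
  exact ⟨r, by ring⟩

private lemma eval_zero_of_sq_dvd (f : ℂ[X]) (a : ℂ) (h : (X - C a) ^ 2 ∣ f) :
    f.eval a = 0 ∧ f.derivative.eval a = 0 := by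
  obtain ⟨p, rfl⟩ := h
  constructor
  · simp
  · simp [derivative_mul, derivative_pow]

private lemma derivative_finset_prod {ι : Type*} [DecidableEq ι] (s : Finset ι)
    (f : ι → ℂ[X]) :
    derivative (∏ i ∈ s, f i) = ∑ i ∈ s, (∏ a ∈ s.erase i, f a) * derivative (f i) := by
  induction s using Finset.induction with
  | empty => simp
  | @insert a s h ih =>
    rw [Finset.prod_insert h, derivative_mul, ih, Finset.sum_insert h,
      Finset.erase_insert h, Finset.mul_sum, mul_comm (derivative (f a))]
    congr 1
    refine Finset.sum_congr rfl fun i hi => ?_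
    have hia : a ≠ i := fun hh => h (hh ▸ hi)
    rw [Finset.erase_insert_of_ne hia,
      Finset.prod_insert (fun hh => h (Finset.mem_of_mem_erase hh)), mul_assoc]

private lemma deriv_eval_prod_linear {ι : Type*} [DecidableEq ι] (s : Finset ι)
    (v : ι → ℂ) (c : ℂ) (hv : ∀ i ∈ s, c - v i ≠ 0) :
    (derivative (∏ i ∈ s, (X - C (v i)))).eval c
      = (∏ i ∈ s, (c - v i)) * ∑ i ∈ s, 1 / (c - v i) := by
  rw [derivative_finset_prod, eval_finset_sum, Finset.mul_sum]
  refine Finset.sum_congr rfl fun i hi => ?_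
  have h1 : (∏ a ∈ s.erase i, (c - v a)) = (∏ a ∈ s, (c - v a)) / (c - v i) := by
    rw [eq_div_iff (hv i hi), Finset.prod_erase_mul _ _ hi]
  simp [eval_prod, h1, div_eq_mul_inv, one_div, mul_comm]

/-- The residue identity, for the rational differential
`∏_{s≠n,k}(u − u_s)du/∏_{m=1}^g (u − q_m)²`, which completes the proof of the
Schlesinger equations for the diagonal entries. -/
theorem residue_identity (g : ℕ) (hg : 1 ≤ g) (q : Fin g → ℂ)
    (hq : ∀ i j : Fin g, i ≠ j → q i ≠ q j)
    (u : Fin (2 * g - 1) → ℂ) (hqu : ∀ j l, q j ≠ u l) :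
    ∑ j, ((∏ l, (q j - u l)) / (∏ α ∈ univ.erase j, (q j - q α)) ^ 2) *
      ((∑ l, 1 / (q j - u l)) - 2 * ∑ m ∈ univ.erase j, 1 / (q j - q m)) = 1 := by
  classical
  have hqu' : ∀ (j : Fin g) (l : Fin (2 * g - 1)), q j - u l ≠ 0 :=
    fun j l => sub_ne_zero.2 (hqu j l)
  have hqq : ∀ j : Fin g, ∀ m ∈ (univ : Finset (Fin g)).erase j, q j - q m ≠ 0 :=
    fun j m hm => sub_ne_zero.2 (hq j m fun h => (Finset.mem_erase.1 hm).1 h.symm)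
  set pe : Fin g → ℂ := fun j => ∏ l, (q j - u l) with hpe
  set me : Fin g → ℂ := fun j => (∏ α ∈ univ.erase j, (q j - q α)) ^ 2 with hme
  set S : Fin g → ℂ := fun j => ∑ l, 1 / (q j - u l) with hS
  set D : Fin g → ℂ := fun j => 2 * ∑ m ∈ univ.erase j, 1 / (q j - q m) with hD
  set A : Fin g → ℂ := fun j => pe j / me j with hA
  set B : Fin g → ℂ := fun j => A j * (S j - D j) with hB
  have hpe0 : ∀ j, pe j ≠ 0 := fun j => Finset.prod_ne_zero_iff.2 fun l _ => hqu' j l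
  have hme0 : ∀ j, me j ≠ 0 := fun j =>
    pow_ne_zero _ (Finset.prod_ne_zero_iff.2 fun m hm => hqq j m hm)
  -- polynomials
  set P : ℂ[X] := ∏ l, (X - C (u l)) with hP
  set N : Fin g → ℂ[X] := fun j => ∏ m ∈ univ.erase j, (X - C (q m)) with hN
  set M : Fin g → ℂ[X] := fun j => (N j) ^ 2 with hM
  set R : ℂ[X] := ∑ j, (C (A j) + C (B j) * (X - C (q j))) * M j with hR
  set Q : ℂ[X] := ∏ j, (X - C (q j)) ^ 2 with hQ
  have hNe : ∀ j, (N j).eval (q j) = ∏ α ∈ univ.erase j, (q j - q α) := by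
    intro j; simp [hN, eval_prod]
  have hMe : ∀ j, (M j).eval (q j) = me j := by
    intro j; simp [hM, hNe j, hme]
  have hPe : ∀ j, P.eval (q j) = pe j := by
    intro j; simp [hP, eval_prod, hpe]
  have hPd : ∀ j, P.derivative.eval (q j) = pe j * S j := by
    intro j
    simpa [hpe, hS] using deriv_eval_prod_linear univ u (q j) (fun l _ => hqu' j l)
  have hMd : ∀ j, (M j).derivative.eval (q j) = me j * D j := by
    intro j
    have hNd : (derivative (N j)).eval (q j)
        = (∏ α ∈ univ.erase j, (q j - q α)) * ∑ m ∈ univ.erase j, 1 / (q j - q m) := by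
      simpa [hN] using deriv_eval_prod_linear (univ.erase j) q (q j) (hqq j)
    rw [hM, derivative_pow]
    simp only [eval_mul, eval_pow, eval_C, eval_natCast, hNe j, hNd]
    rw [hme, hD]
    norm_num
    ring
  -- cross terms vanish to second order
  have hcross : ∀ j j' : Fin g, j ≠ j' →
      (X - C (q j)) ^ 2 ∣ (C (A j') + C (B j') * (X - C (q j'))) * M j' := by
    intro j j' hjj
    refine Dvd.dvd.mul_left ?_ _
    rw [hM]
    show (X - C (q j)) ^ 2 ∣ (∏ m ∈ univ.erase j', (X - C (q m))) ^ 2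
    exact pow_dvd_pow_of_dvd
      (Finset.dvd_prod_of_mem (fun m => X - C (q m)) (s := univ.erase j') (Finset.mem_erase.2 ⟨hjj, Finset.mem_univ j⟩)) 2
  -- each (X - q j)^2 divides P - R
  have hdvd : ∀ j, (X - C (q j)) ^ 2 ∣ P - R := by
    intro j
    apply sq_dvd_of_eval_eq_zero
    · rw [eval_sub, sub_eq_zero, hR, eval_finset_sum]
      rw [Finset.sum_eq_single j]
      · rw [eval_mul, hMe j]
        simp only [eval_add, eval_mul, eval_sub, eval_C, eval_X, sub_self, mul_zero, add_zero]
        rw [hPe j, hA, div_mul_cancel₀ _ (hme0 j)]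
      · intro j' _ hj'
        exact ((eval_zero_of_sq_dvd _ _ (hcross j j' (Ne.symm hj'))).1)
      · intro h; exact absurd (Finset.mem_univ j) h
    · rw [derivative_sub, eval_sub, sub_eq_zero, hR, derivative_sum, eval_finset_sum]
      rw [Finset.sum_eq_single j]
      · rw [derivative_mul, eval_add, eval_mul, eval_mul, hMe j, hMd j]
        simp only [derivative_add, derivative_C, derivative_mul, derivative_sub,
          derivative_X, zero_add, mul_one, sub_zero, eval_add, eval_mul, eval_sub,
          eval_C, eval_X, eval_zero, sub_self, mul_zero, add_zero, zero_mul]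
        rw [hPd j]
        have hAme : A j * me j = pe j := div_mul_cancel₀ _ (hme0 j)
        have hBme : B j * me j = pe j * (S j - D j) := by
          rw [hB, mul_right_comm, hAme]
        linear_combination (-1 : ℂ) * hBme - D j * hAme
      · intro j' _ hj'
        exact ((eval_zero_of_sq_dvd _ _ (hcross j j' (Ne.symm hj'))).2)
      · intro h; exact absurd (Finset.mem_univ j) h
  -- Q divides P - R
  have hinj : Function.Injective q := fun i j h => by
    by_contra hne; exact hq i j hne h
  have hQdvd : Q ∣ P - R := by
    rw [hQ]
    refine Finset.prod_dvd_of_coprime ?_ fun j _ => hdvd j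
    intro i _ j _ hij
    exact (Polynomial.pairwise_coprime_X_sub_C hinj hij).pow
  -- degrees
  have hPm : P.Monic := monic_prod_of_monic _ _ fun _ _ => monic_X_sub_C _
  have hPdeg : P.natDegree = 2 * g - 1 := by
    rw [hP, natDegree_prod_of_monic _ _ fun _ _ => monic_X_sub_C _]
    simp
  have hNm : ∀ j, (N j).Monic := fun j => monic_prod_of_monic _ _ fun _ _ => monic_X_sub_C _
  have hNdeg : ∀ j, (N j).natDegree = g - 1 := by
    intro j
    rw [hN, natDegree_prod_of_monic _ _ fun _ _ => monic_X_sub_C _]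
    simp [Finset.card_erase_of_mem]
  have hMm : ∀ j, (M j).Monic := fun j => (hNm j).pow 2
  have hMdeg : ∀ j, (M j).natDegree = 2 * (g - 1) := by
    intro j; rw [hM, natDegree_pow, hNdeg j, mul_comm]
  have hQdeg : Q.natDegree = 2 * g := by
    rw [hQ, natDegree_prod_of_monic _ _ fun _ _ => (monic_X_sub_C _).pow 2]
    simp [natDegree_pow, mul_comm]
  have hRdeg : R.natDegree ≤ 2 * g - 1 := by
    rw [hR]
    refine (natDegree_sum_le _ _).trans ?_
    rw [Finset.fold_max_le]
    refine ⟨by omega, fun j _ => ?_⟩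
    refine (natDegree_mul_le).trans ?_
    have h1 : (C (A j) + C (B j) * (X - C (q j))).natDegree ≤ 1 := by
      refine (natDegree_add_le _ _).trans ?_
      simp only [natDegree_C, max_le_iff]
      exact ⟨Nat.zero_le _, (natDegree_mul_le).trans (by simp)⟩
    have h2 := hMdeg j
    omega
  -- conclude P = R
  have hPR : P = R := by
    by_contra hne
    have hE : P - R ≠ 0 := sub_ne_zero.2 hne
    have := Polynomial.natDegree_le_of_dvd hQdvd hE
    have hEdeg : (P - R).natDegree ≤ 2 * g - 1 :=
      (natDegree_sub_le _ _).trans (by rw [hPdeg]; exact max_le le_rfl hRdeg)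
    omega
  -- compare coefficients at degree 2g - 1
  have hcoeffP : P.coeff (2 * g - 1) = 1 := by
    have := hPm.coeff_natDegree
    rwa [hPdeg] at this
  have hcoeffR : R.coeff (2 * g - 1) = ∑ j, B j := by
    rw [hR, finset_sum_coeff]
    refine Finset.sum_congr rfl fun j _ => ?_
    rw [add_mul, coeff_add, coeff_C_mul, mul_assoc (C (B j)), coeff_C_mul, sub_mul,
      coeff_sub, coeff_C_mul]
    have h1 : (M j).coeff (2 * g - 1) = 0 := by
      apply coeff_eq_zero_of_natDegree_lt
      rw [hMdeg j]; omega
    have h2 : (X * M j).coeff (2 * g - 1) = 1 := by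
      have heq : 2 * g - 1 = 2 * (g - 1) + 1 := by omega
      rw [heq, coeff_X_mul]
      have := (hMm j).coeff_natDegree
      rwa [hMdeg j] at this
    rw [h1, h2]
    ring
  have := hcoeffP
  rw [hPR, hcoeffR] at this
  exact this
end

section
/- In the setting of the hyperelliptic residue data, the coefficients β_n satisfy Σ_{n=1}^N β_n = −g. -/
open Finset Polynomial

lemma coeff_basis_card_pred {F : Type*} [Field F] {ι : Type*} [DecidableEq ι]
    {s : Finset ι} {v : ι → F} {i : ι} (hi : i ∈ s) :
    (Lagrange.basis s v i).coeff (#s - 1) = Lagrange.nodalWeight s v i := by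
  rw [Lagrange.basis_eq_prod_sub_inv_mul_nodal_div hi, ← Lagrange.nodal_erase_eq_nodal_div hi,
    coeff_C_mul]
  have h1 : (Lagrange.nodal (s.erase i) v).natDegree = #s - 1 := by
    rw [Lagrange.natDegree_nodal, card_erase_of_mem hi]
  rw [← h1, (Lagrange.nodal_monic).coeff_natDegree, mul_one]

lemma sum_eval_mul_nodalWeight_eq_zero {F : Type*} [Field F] {ι : Type*} [DecidableEq ι]
    (s : Finset ι) (v : ι → F) (hvs : Set.InjOn v ↑s) (f : Polynomial F)
    (hf : f.natDegree + 2 ≤ #s) :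
    ∑ i ∈ s, f.eval (v i) * Lagrange.nodalWeight s v i = 0 := by
  have h1 : f.degree < (#s : WithBot ℕ) :=
    lt_of_le_of_lt degree_le_natDegree (by exact_mod_cast Nat.lt_of_lt_of_le (by omega) le_rfl)
  have h2 := Lagrange.eq_interpolate hvs h1
  have h3 : f.coeff (#s - 1) = ∑ i ∈ s, f.eval (v i) * Lagrange.nodalWeight s v i := by
    conv_lhs => rw [h2]
    rw [Lagrange.interpolate_apply, finset_sum_coeff]
    exact Finset.sum_congr rfl fun i hi => by rw [coeff_C_mul, coeff_basis_card_pred hi]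
  rw [← h3, coeff_eq_zero_of_natDegree_lt (by omega)]

/-- The residue `A12^{(n)}` of the function `A₁₂(u)` associated with the differential `Ω`
on the hyperelliptic curve `v² = ∏_{m=1}^N (u − u_m)`, as an explicit rational expression:
`A12_n = [Σ_j (1/(u_n−q_j) + α_j)·∏_{β≠j}(u_n−q_β)/(w_j·∏_{β≠j}(q_j−q_β))]
          · ∏_β (u_n−q_β) / ∏_{m≠n}(u_n−u_m)`. -/
noncomputable def A12res {g N : ℕ} (u : Fin N → ℂ) (q w a : Fin g → ℂ) (n : Fin N) : ℂ :=
  (∑ j, (1 / (u n - q j) + a j) * (∏ β ∈ univ.erase j, (u n - q β)) /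
      (w j * ∏ β ∈ univ.erase j, (q j - q β))) *
    (∏ β, (u n - q β)) / ∏ m ∈ univ.erase n, (u n - u m)

/-- The value `Ω_∞ = Ω(P_∞) = −2·Σ_j α_j/(w_j·∏_{β≠j}(q_j−q_β))`. -/
noncomputable def OmegaInfty {g : ℕ} (q w a : Fin g → ℂ) : ℂ :=
  -2 * ∑ j, a j / (w j * ∏ β ∈ univ.erase j, (q j - q β))

/-- The coefficient
`β_n = A12_n·(Σ_j 1/(w_j·(u_n−q_j)·∏_{β≠j}(q_j−q_β)) − Ω_∞/2)`. -/
noncomputable def betaCoef {g N : ℕ} (u : Fin N → ℂ) (q w a : Fin g → ℂ) (n : Fin N) : ℂ :=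
  A12res u q w a n *
    ((∑ j, 1 / (w j * (u n - q j) * ∏ β ∈ univ.erase j, (q j - q β))) -
      OmegaInfty q w a / 2)

/-- In the setting of the hyperelliptic residue data, `Σ_{n=1}^N β_n = −g`. -/
theorem sum_beta_eq_neg_genus {g N : ℕ} (hg : 1 ≤ g) (hN : N = 2 * g + 1)
    (u : Fin N → ℂ) (q w a : Fin g → ℂ)
    (hu : ∀ m n : Fin N, m ≠ n → u m ≠ u n)
    (hq : ∀ i j : Fin g, i ≠ j → q i ≠ q j)
    (hqu : ∀ (j : Fin g) (n : Fin N), q j ≠ u n)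
    (hw : ∀ j, (w j) ^ 2 * ∏ m, (q j - u m) = 1) :
    ∑ n, betaCoef u q w a n = -(g : ℂ) := by
  subst hN
  classical
  -- basic nonvanishing facts
  have hw' : ∀ j, w j ≠ 0 := by
    intro j h
    have := hw j
    rw [h] at this
    simp at this
  have hDq : ∀ j : Fin g, (∏ β ∈ univ.erase j, (q j - q β)) ≠ 0 := by
    intro j
    refine prod_ne_zero_iff.mpr fun β hβ => sub_ne_zero.mpr ?_
    exact hq j β (Ne.symm (mem_erase.mp hβ).1)
  have hPq : ∀ k : Fin g, (∏ m, (q k - u m)) ≠ 0 := by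
    intro k h
    have := hw k
    rw [h, mul_zero] at this
    simp at this
  -- abbreviations
  set d : Fin g → ℂ := fun j => (w j * ∏ β ∈ univ.erase j, (q j - q β))⁻¹ with hd_def
  set c : ℂ := ∑ j, a j * d j with hc_def
  -- polynomials
  set Qp : Polynomial ℂ := Lagrange.nodal univ q with hQp_def
  set Qe : Fin g → Polynomial ℂ := fun j => Lagrange.nodal (univ.erase j) q with hQe_def
  set Fp : Polynomial ℂ := ∑ j, C (d j) * ((Qe j) ^ 2 + C (a j) * (Qe j * Qp)) with hFp_def
  set Gp : Polynomial ℂ := (∑ j, C (d j) * Qe j) + C c * Qp with hGp_def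
  -- degrees
  have hQpd : Qp.natDegree = g := by
    rw [hQp_def, Lagrange.natDegree_nodal, card_univ, Fintype.card_fin]
  have hQed : ∀ j, (Qe j).natDegree = g - 1 := by
    intro j
    rw [hQe_def]
    simp only
    rw [Lagrange.natDegree_nodal, card_erase_of_mem (mem_univ j), card_univ, Fintype.card_fin]
  have hFd : Fp.natDegree ≤ 2 * g - 1 := by
    refine natDegree_sum_le_of_forall_le _ _ fun j _ => le_trans (natDegree_C_mul_le _ _) ?_
    refine le_trans (natDegree_add_le _ _) (max_le ?_ ?_)
    · rw [natDegree_pow, hQed]; omega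
    · refine le_trans (natDegree_C_mul_le _ _) (le_trans natDegree_mul_le ?_)
      rw [hQed, hQpd]; omega
  have hGd : Gp.natDegree ≤ g := by
    refine le_trans (natDegree_add_le _ _) (max_le ?_ ?_)
    · exact natDegree_sum_le_of_forall_le _ _ fun j _ =>
        le_trans (natDegree_C_mul_le _ _) (by rw [hQed]; omega)
    · exact le_trans (natDegree_C_mul_le _ _) (le_of_eq hQpd)
  -- node function
  set v : Fin g ⊕ Fin (2 * g + 1) → ℂ := Sum.elim q u with hv_def
  have hinj : Set.InjOn v (univ : Finset (Fin g ⊕ Fin (2 * g + 1))) := by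
    refine Function.Injective.injOn ?_
    intro x y hxy
    rcases x with i | n <;> rcases y with i' | n' <;>
      simp only [hv_def, Sum.elim_inl, Sum.elim_inr] at hxy
    · have : i = i' := by by_contra hne; exact hq i i' hne hxy
      rw [this]
    · exact absurd hxy (hqu i n')
    · exact absurd hxy.symm (hqu i' n)
    · have : n = n' := by by_contra hne; exact hu n n' hne hxy
      rw [this]
  have hcard : #(univ : Finset (Fin g ⊕ Fin (2 * g + 1))) = g + (2 * g + 1) := by
    simp [card_univ]
  have hHd : (Fp * Gp).natDegree ≤ 2 * g - 1 + g := le_trans natDegree_mul_le (add_le_add hFd hGd)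
  have hzero := sum_eval_mul_nodalWeight_eq_zero univ v hinj (Fp * Gp)
    (by rw [hcard]; omega)
  rw [Fintype.sum_sum_type] at hzero
  -- eval formulas
  have hevQp : ∀ x : ℂ, Qp.eval x = ∏ β, (x - q β) := by
    intro x; rw [hQp_def, Lagrange.eval_nodal]
  have hevQe : ∀ (j) (x : ℂ), (Qe j).eval x = ∏ β ∈ univ.erase j, (x - q β) := by
    intro j x; rw [hQe_def]; simp only; rw [Lagrange.eval_nodal]
  have hevF : ∀ x : ℂ, Fp.eval x = ∑ j, d j *
      ((∏ β ∈ univ.erase j, (x - q β)) ^ 2 +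
        a j * ((∏ β ∈ univ.erase j, (x - q β)) * ∏ β, (x - q β))) := by
    intro x
    rw [hFp_def, eval_finset_sum]
    exact Finset.sum_congr rfl fun j _ => by
      simp [hevQe, hevQp]
  have hevG : ∀ x : ℂ, Gp.eval x =
      (∑ j, d j * ∏ β ∈ univ.erase j, (x - q β)) + c * ∏ β, (x - q β) := by
    intro x
    rw [hGp_def]
    simp [eval_finset_sum, hevQe, hevQp]
  -- nodal weights
  have hwInl : ∀ k : Fin g, Lagrange.nodalWeight univ v (Sum.inl k) =
      (∏ β ∈ univ.erase k, (q k - q β))⁻¹ * (∏ m, (q k - u m))⁻¹ := by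
    intro k
    rw [Lagrange.nodalWeight]
    have he : (univ.erase (Sum.inl k) : Finset (Fin g ⊕ Fin (2 * g + 1))) =
        (univ.erase k).disjSum univ := by
      ext x; cases x <;> simp
    rw [he, prod_disjSum]
    simp only [hv_def, Sum.elim_inl, Sum.elim_inr]
    rw [prod_inv_distrib, prod_inv_distrib]
  have hwInr : ∀ n : Fin (2 * g + 1), Lagrange.nodalWeight univ v (Sum.inr n) =
      (∏ β, (u n - q β))⁻¹ * (∏ m ∈ univ.erase n, (u n - u m))⁻¹ := by
    intro n
    rw [Lagrange.nodalWeight]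
    have he : (univ.erase (Sum.inr n) : Finset (Fin g ⊕ Fin (2 * g + 1))) =
        (univ : Finset (Fin g)).disjSum (univ.erase n) := by
      ext x; cases x <;> simp
    rw [he, prod_disjSum]
    simp only [hv_def, Sum.elim_inl, Sum.elim_inr]
    rw [prod_inv_distrib, prod_inv_distrib]
  -- (B) terms at q-nodes equal 1
  have hB : ∀ k : Fin g,
      (Fp * Gp).eval (v (Sum.inl k)) * Lagrange.nodalWeight univ v (Sum.inl k) = 1 := by
    intro k
    have hQ0 : ∏ β, (q k - q β) = 0 := prod_eq_zero (mem_univ k) (sub_self _)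
    have hE0 : ∀ j, j ≠ k → ∏ β ∈ univ.erase j, (q k - q β) = 0 := fun j hjk =>
      prod_eq_zero (mem_erase.mpr ⟨Ne.symm hjk, mem_univ k⟩) (sub_self _)
    have hFk : Fp.eval (q k) = d k * (∏ β ∈ univ.erase k, (q k - q β)) ^ 2 := by
      rw [hevF, Finset.sum_eq_single k]
      · rw [hQ0]; ring
      · intro j _ hjk; rw [hE0 j hjk]; ring
      · intro h; exact absurd (mem_univ k) h
    have hGk : Gp.eval (q k) = d k * ∏ β ∈ univ.erase k, (q k - q β) := by
      rw [hevG, Finset.sum_eq_single k]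
      · rw [hQ0]; ring
      · intro j _ hjk; rw [hE0 j hjk]; ring
      · intro h; exact absurd (mem_univ k) h
    have hPqk : ∏ m, (q k - u m) = ((w k) ^ 2)⁻¹ :=
      eq_inv_of_mul_eq_one_left (by linear_combination hw k)
    rw [eval_mul]
    simp only [hv_def, Sum.elim_inl]
    rw [hFk, hGk, hwInl k, hPqk, hd_def]
    field_simp [hDq k, hw' k]
  -- (A) terms at u-nodes equal betaCoef
  have hA : ∀ n : Fin (2 * g + 1),
      (Fp * Gp).eval (v (Sum.inr n)) * Lagrange.nodalWeight univ v (Sum.inr n) =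
        betaCoef u q w a n := by
    intro n
    have hxq : ∀ j, u n - q j ≠ 0 := fun j => sub_ne_zero.mpr (Ne.symm (hqu j n))
    have hQx : (∏ β, (u n - q β)) ≠ 0 := prod_ne_zero_iff.mpr fun β _ => hxq β
    have hPn : (∏ m ∈ univ.erase n, (u n - u m)) ≠ 0 := by
      refine prod_ne_zero_iff.mpr fun m hm => sub_ne_zero.mpr ?_
      exact hu n m (Ne.symm (mem_erase.mp hm).1)
    have hsplit : ∀ j, ∏ β, (u n - q β) = (u n - q j) * ∏ β ∈ univ.erase j, (u n - q β) :=
      fun j => (mul_prod_erase univ _ (mem_univ j)).symm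
    -- step 1 : A12res = F.eval / prod
    have hstep1 : A12res u q w a n = Fp.eval (u n) / ∏ m ∈ univ.erase n, (u n - u m) := by
      rw [A12res]
      congr 1
      rw [hevF, Finset.sum_mul]
      refine Finset.sum_congr rfl fun j _ => ?_
      rw [hsplit j, hd_def]
      field_simp [hxq j, hw' j, hDq j]
    -- step 2 : second factor = G.eval / prod
    have hstep2 : (∑ j, 1 / (w j * (u n - q j) * ∏ β ∈ univ.erase j, (q j - q β))) -
        OmegaInfty q w a / 2 = Gp.eval (u n) / ∏ β, (u n - q β) := by
      have homega : -(OmegaInfty q w a / 2) = c := by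
        rw [OmegaInfty, hc_def]
        have hdd : ∀ j : Fin g, a j / (w j * ∏ β ∈ univ.erase j, (q j - q β)) = a j * d j := by
          intro j; simp only [hd_def]; rw [div_eq_mul_inv]
        rw [Finset.sum_congr rfl fun j _ => hdd j]
        ring
      rw [sub_eq_add_neg, homega, eq_div_iff hQx, add_mul, Finset.sum_mul, hevG]
      congr 1
      refine Finset.sum_congr rfl fun j _ => ?_
      rw [hsplit j, hd_def]
      field_simp [hxq j, hw' j, hDq j]
    rw [betaCoef, hstep1, hstep2, eval_mul]
    simp only [hv_def, Sum.elim_inr]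
    rw [hwInr n, div_mul_div_comm, div_eq_mul_inv, mul_inv]
    ring
  -- conclude
  have hsum1 : ∑ k : Fin g,
      (Fp * Gp).eval (v (Sum.inl k)) * Lagrange.nodalWeight univ v (Sum.inl k) = (g : ℂ) := by
    rw [Finset.sum_congr rfl fun k _ => hB k]
    simp [card_univ]
  have hsum2 : ∑ n : Fin (2 * g + 1),
      (Fp * Gp).eval (v (Sum.inr n)) * Lagrange.nodalWeight univ v (Sum.inr n) =
        ∑ n, betaCoef u q w a n :=
    Finset.sum_congr rfl fun n _ => hA n
  rw [hsum1, hsum2] at hzero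
  linear_combination hzero
end

section
/- In the setting of the hyperelliptic residue data, the residues A12_n satisfy Σ_{n=1}^N A12_n = 0. -/
open Finset

open Polynomial in
/-- Sum of "leading Lagrange coefficients" of a polynomial of degree `< N - 1`
at `N` distinct nodes vanishes. -/
lemma sum_eval_div_prod_eq_zero_aux {N : ℕ} (u : Fin N → ℂ)
    (hu : Function.Injective u) (P : Polynomial ℂ) (hP : P.degree < ((N - 1 : ℕ) : WithBot ℕ)) :
    ∑ n, P.eval (u n) / ∏ m ∈ univ.erase n, (u n - u m) = 0 := by
  have hvs : Set.InjOn u (univ : Finset (Fin N)) := hu.injOn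
  have hcard : (univ : Finset (Fin N)).card = N := by simp
  have hPN : P.degree < ((univ : Finset (Fin N)).card : WithBot ℕ) := by
    refine lt_of_lt_of_le hP ?_
    rw [hcard]
    exact_mod_cast Nat.cast_le.2 (Nat.sub_le N 1)
  have hinterp : Lagrange.interpolate univ u (fun n => P.eval (u n)) = P :=
    (Lagrange.eq_interpolate hvs hPN).symm
  have hcoeff := congrArg (fun Q : Polynomial ℂ => Q.coeff (N - 1)) hinterp
  simp only [Lagrange.interpolate_apply, Polynomial.finset_sum_coeff, coeff_C_mul] at hcoeff
  have hbasis : ∀ n : Fin N, (Lagrange.basis univ u n).coeff (N - 1) =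
      (∏ m ∈ univ.erase n, (u n - u m))⁻¹ := by
    intro n
    have hdeg : (Lagrange.basis univ u n).degree = ((univ.card - 1 : ℕ) : WithBot ℕ) :=
      Lagrange.degree_basis hvs (mem_univ n)
    have hnd : (Lagrange.basis univ u n).natDegree = N - 1 := by
      rw [natDegree_eq_of_degree_eq_some hdeg, hcard]
    rw [← hnd, coeff_natDegree]
    rw [Lagrange.basis, leadingCoeff_prod, ← Finset.prod_inv_distrib]
    refine Finset.prod_congr rfl fun m hm => ?_
    rw [Lagrange.basisDivisor, leadingCoeff_mul, leadingCoeff_C, leadingCoeff_X_sub_C, mul_one]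
  have hP0 : P.coeff (N - 1) = 0 := coeff_eq_zero_of_degree_lt hP
  rw [hP0] at hcoeff
  rw [← hcoeff]
  refine Finset.sum_congr rfl fun n _ => ?_
  rw [hbasis n, div_eq_mul_inv]

open Polynomial in
/-- In the setting of the hyperelliptic residue data, the residues `A12_n` sum to zero. -/
theorem sum_A12_eq_zero {g N : ℕ} (hg : 1 ≤ g) (hN : N = 2 * g + 1)
    (u : Fin N → ℂ) (q w a : Fin g → ℂ)
    (hu : ∀ m n : Fin N, m ≠ n → u m ≠ u n)
    (hq : ∀ i j : Fin g, i ≠ j → q i ≠ q j)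
    (hqu : ∀ (j : Fin g) (n : Fin N), q j ≠ u n)
    (hw : ∀ j, (w j) ^ 2 * ∏ m, (q j - u m) = 1) :
    ∑ n, A12res u q w a n = 0 := by
  set P : Polynomial ℂ := ∑ j, C (w j * ∏ β ∈ univ.erase j, (q j - q β))⁻¹ *
      ((∏ β ∈ univ.erase j, (X - C (q β))) ^ 2 +
        C (a j) * (∏ β ∈ univ.erase j, (X - C (q β))) * ∏ β, (X - C (q β))) with hPdef
  have huinj : Function.Injective u := fun m n h => by
    by_contra hmn; exact hu m n hmn h
  -- degree bound
  have hdegP : P.degree < ((N - 1 : ℕ) : WithBot ℕ) := by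
    have hE : ∀ j, ((∏ β ∈ univ.erase j, (X - C (q β))) : Polynomial ℂ).natDegree ≤ g - 1 := by
      intro j
      refine (natDegree_prod_le _ _).trans ?_
      calc ∑ β ∈ univ.erase j, ((X : Polynomial ℂ) - C (q β)).natDegree
          ≤ ∑ _β ∈ univ.erase j, 1 :=
            Finset.sum_le_sum fun β _ => le_of_eq (natDegree_X_sub_C _)
        _ = g - 1 := by simp
    have hF : ((∏ β : Fin g, (X - C (q β))) : Polynomial ℂ).natDegree ≤ g := by
      refine (natDegree_prod_le _ _).trans ?_
      calc ∑ β : Fin g, ((X : Polynomial ℂ) - C (q β)).natDegree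
          ≤ ∑ _β : Fin g, 1 := Finset.sum_le_sum fun β _ => le_of_eq (natDegree_X_sub_C _)
        _ = g := by simp
    have hnd : P.natDegree ≤ 2 * g - 1 := by
      refine natDegree_sum_le_of_forall_le _ _ fun j _ => ?_
      refine (natDegree_mul_le).trans ?_
      rw [natDegree_C, zero_add]
      refine (natDegree_add_le _ _).trans (max_le ?_ ?_)
      · calc ((∏ β ∈ univ.erase j, ((X : Polynomial ℂ) - C (q β))) ^ 2).natDegree
            ≤ 2 * (∏ β ∈ univ.erase j, ((X : Polynomial ℂ) - C (q β))).natDegree :=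
              natDegree_pow_le
          _ ≤ 2 * (g - 1) := Nat.mul_le_mul_left 2 (hE j)
          _ ≤ 2 * g - 1 := by omega
      · calc (C (a j) * (∏ β ∈ univ.erase j, (X - C (q β))) *
              ∏ β : Fin g, ((X : Polynomial ℂ) - C (q β))).natDegree
            ≤ (C (a j) * ∏ β ∈ univ.erase j, ((X : Polynomial ℂ) - C (q β))).natDegree +
              (∏ β : Fin g, ((X : Polynomial ℂ) - C (q β))).natDegree := natDegree_mul_le
          _ ≤ ((C (a j)).natDegree +
                (∏ β ∈ univ.erase j, ((X : Polynomial ℂ) - C (q β))).natDegree) +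
              (∏ β : Fin g, ((X : Polynomial ℂ) - C (q β))).natDegree :=
              Nat.add_le_add_right natDegree_mul_le _
          _ ≤ (0 + (g - 1)) + g := by
              exact Nat.add_le_add (Nat.add_le_add (le_of_eq (natDegree_C _)) (hE j)) hF
          _ ≤ 2 * g - 1 := by omega
    calc P.degree ≤ (P.natDegree : WithBot ℕ) := degree_le_natDegree
      _ ≤ ((2 * g - 1 : ℕ) : WithBot ℕ) := by exact_mod_cast hnd
      _ < ((N - 1 : ℕ) : WithBot ℕ) := by
          have : 2 * g - 1 < N - 1 := by omega
          exact_mod_cast this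
  -- pointwise identity
  have hpoint : ∀ n, A12res u q w a n = P.eval (u n) / ∏ m ∈ univ.erase n, (u n - u m) := by
    intro n
    rw [A12res]
    congr 1
    rw [hPdef, eval_finset_sum, Finset.sum_mul]
    refine Finset.sum_congr rfl fun j _ => ?_
    simp only [eval_mul, eval_add, eval_pow, eval_C, eval_prod, eval_sub, eval_X]
    have hx : u n - q j ≠ 0 := sub_ne_zero.2 fun h => hqu j n h.symm
    have hwj : w j ≠ 0 := by
      intro h
      have := hw j
      rw [h] at this
      simp at this
    have hprodq : (∏ β ∈ univ.erase j, (q j - q β)) ≠ 0 := by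
      refine Finset.prod_ne_zero_iff.2 fun β hβ => ?_
      exact sub_ne_zero.2 (hq j β fun h => (Finset.mem_erase.1 hβ).1 h.symm)
    have hFsplit : (∏ β, (u n - q β)) = (u n - q j) * ∏ β ∈ univ.erase j, (u n - q β) :=
      (Finset.mul_prod_erase univ _ (mem_univ j)).symm
    rw [hFsplit]
    field_simp
  rw [Finset.sum_congr rfl fun n _ => hpoint n]
  exact sum_eval_div_prod_eq_zero_aux u huinj P hdegP
end

section
/- In the setting of the hyperelliptic residue data, assume additionally g ≥ 2 and let i ≠ j be indices in {1,…,g}. Then Σ_{n=1}^N A12_n/((u_n − q_j)(u_n − q_i)) = w_j·∏_{β≠j}(q_j − q_β)/(q_i − q_j) + w_i·∏_{β≠i}(q_i − q_β)/(q_j − q_i). -/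
open Finset

section Aux
open Polynomial Lagrange

lemma erase_disjSum_inl {α β : Type*} [DecidableEq α] [DecidableEq β]
    (s : Finset α) (t : Finset β) (n : α) :
    (s.disjSum t).erase (Sum.inl n) = (s.erase n).disjSum t := by
  ext x; cases x <;> simp [Finset.mem_erase, and_comm]

lemma erase_disjSum_inr {α β : Type*} [DecidableEq α] [DecidableEq β]
    (s : Finset α) (t : Finset β) (n : β) :
    (s.disjSum t).erase (Sum.inr n) = s.disjSum (t.erase n) := by
  ext x; cases x <;> simp [Finset.mem_erase, and_comm]

lemma key_interp {ι : Type*} [DecidableEq ι] {s : Finset ι} {v : ι → ℂ}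
    (hvs : Set.InjOn v s) {P : ℂ[X]} (hP : P.degree < #s) :
    ∑ n ∈ s, P.eval (v n) * (∏ m ∈ s.erase n, (v n - v m))⁻¹ = P.coeff (#s - 1) := by
  conv_rhs => rw [eq_interpolate hvs hP, interpolate_apply, finset_sum_coeff]
  refine Finset.sum_congr rfl fun n hn => ?_
  have hbasis : Lagrange.basis s v n
      = C (∏ m ∈ s.erase n, (v n - v m)⁻¹) * nodal (s.erase n) v := by
    rw [Lagrange.basis, nodal, map_prod, ← Finset.prod_mul_distrib]
    rfl
  have h1 : (nodal (s.erase n) v).coeff (#s - 1) = 1 := by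
    have hm : (nodal (s.erase n) v).Monic := nodal_monic
    have hdeg : (nodal (s.erase n) v).natDegree = #s - 1 := by
      rw [natDegree_nodal, card_erase_of_mem hn]
    rw [← hdeg]; exact hm.coeff_natDegree
  rw [hbasis, coeff_C_mul, coeff_C_mul, h1, mul_one, Finset.prod_inv_distrib]

end Aux


open Polynomial Lagrange in
/-- In the setting of the hyperelliptic residue data (with `g ≥ 2` and `i ≠ j`),
`Σ_n A12_n/((u_n − q_j)(u_n − q_i))
  = w_j·∏_{β≠j}(q_j − q_β)/(q_i − q_j) + w_i·∏_{β≠i}(q_i − q_β)/(q_j − q_i)`. -/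
theorem sum_A12_double_pole_mixed {g N : ℕ} (hg : 2 ≤ g) (hN : N = 2 * g + 1)
    (u : Fin N → ℂ) (q w a : Fin g → ℂ)
    (hu : ∀ m n : Fin N, m ≠ n → u m ≠ u n)
    (hq : ∀ i j : Fin g, i ≠ j → q i ≠ q j)
    (hqu : ∀ (j : Fin g) (n : Fin N), q j ≠ u n)
    (hw : ∀ j, (w j) ^ 2 * ∏ m, (q j - u m) = 1)
    (i j : Fin g) (hij : i ≠ j) :
    ∑ n, A12res u q w a n / ((u n - q j) * (u n - q i)) =
      w j * (∏ β ∈ univ.erase j, (q j - q β)) / (q i - q j) +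
        w i * (∏ β ∈ univ.erase i, (q i - q β)) / (q j - q i) := by
  -- basic nonvanishing facts
  set D : Fin g → ℂ := fun k => ∏ β ∈ univ.erase k, (q k - q β) with hD
  have hD0 : ∀ k, D k ≠ 0 := fun k =>
    Finset.prod_ne_zero_iff.mpr fun β hβ =>
      sub_ne_zero.mpr (hq k β fun h => (Finset.mem_erase.mp hβ).1 h.symm)
  have hw0 : ∀ k, w k ≠ 0 := by
    intro k h
    have := hw k
    rw [h] at this
    simp at this
  have hPq : ∀ k, (∏ m, (q k - u m)) ≠ 0 := fun k =>
    Finset.prod_ne_zero_iff.mpr fun m _ => sub_ne_zero.mpr (hqu k m)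
  have hwsq : ∀ k, (∏ m, (q k - u m))⁻¹ = w k ^ 2 :=
    fun k => (eq_inv_of_mul_eq_one_left (hw k)).symm
  have hE : ∀ n, (∏ m ∈ univ.erase n, (u n - u m)) ≠ 0 := fun n =>
    Finset.prod_ne_zero_iff.mpr fun m hm =>
      sub_ne_zero.mpr (hu n m fun h => (Finset.mem_erase.mp hm).1 h.symm)
  have huq : ∀ (n : Fin N) (k : Fin g), u n - q k ≠ 0 :=
    fun n k => sub_ne_zero.mpr fun h => hqu k n h.symm
  have hqij : q i - q j ≠ 0 := sub_ne_zero.mpr (hq i j hij)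
  have hqji : q j - q i ≠ 0 := sub_ne_zero.mpr (hq j i hij.symm)
  -- the interpolating polynomial
  set F : ℂ[X] := ∑ k : Fin g, C ((w k * D k)⁻¹) *
      ((1 + C (a k) * (X - C (q k))) * (nodal (univ.erase k) q) ^ 2) with hF
  have hFeval : ∀ x : ℂ, F.eval x =
      ∑ k, (w k * D k)⁻¹ * ((1 + a k * (x - q k)) *
        (∏ β ∈ univ.erase k, (x - q β)) ^ 2) := by
    intro x
    rw [hF, eval_finset_sum]
    refine Finset.sum_congr rfl fun k _ => ?_
    simp [eval_nodal]
  have hFnat : F.natDegree ≤ 2 * g - 1 := by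
    rw [hF]
    apply Polynomial.natDegree_sum_le_of_forall_le
    intro k _
    refine le_trans (natDegree_mul_le) ?_
    have h1 : (1 + C (a k) * (X - C (q k))).natDegree ≤ 1 := by compute_degree
    have h2 : ((nodal (univ.erase k) q) ^ 2).natDegree = 2 * (g - 1) := by
      rw [natDegree_pow, natDegree_nodal, card_erase_of_mem (mem_univ k), card_univ,
        Fintype.card_fin]
    have h3 : ((1 + C (a k) * (X - C (q k))) * (nodal (univ.erase k) q) ^ 2).natDegree
        ≤ 1 + 2 * (g - 1) := le_trans natDegree_mul_le (by omega)
    simp only [natDegree_C, zero_add]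
    omega
  have hFdeg : F.degree < ((N + 2 : ℕ) : WithBot ℕ) := by
    refine lt_of_le_of_lt degree_le_natDegree ?_
    exact_mod_cast (by omega : F.natDegree < N + 2)
  have hFcoeff : F.coeff (N + 2 - 1) = 0 := by
    apply coeff_eq_zero_of_degree_lt
    refine lt_of_le_of_lt degree_le_natDegree ?_
    exact_mod_cast (by omega : F.natDegree < N + 2 - 1)
  -- the nodes
  set v : Fin N ⊕ Bool → ℂ := Sum.elim u (fun b => if b then q i else q j) with hv
  have hvinj : Set.InjOn v (univ : Finset (Fin N ⊕ Bool)) := by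
    intro x _ y _ hxy
    rcases x with n | b <;> rcases y with m | b'
    · by_contra hne
      exact hu n m (fun h => hne (by rw [h])) (by simpa [hv] using hxy)
    · exfalso; rcases b' <;> simp [hv] at hxy <;> exact hqu _ _ hxy.symm
    · exfalso; rcases b <;> simp [hv] at hxy <;> exact hqu _ _ hxy
    · rcases b <;> rcases b' <;> simp [hv] at hxy ⊢
      · exact hq j i hij.symm hxy
      · exact hq i j hij hxy
  have hcard : #(univ : Finset (Fin N ⊕ Bool)) = N + 2 := by
    simp [Finset.card_univ]
  have hkey := key_interp hvinj (P := F) (by rw [hcard]; exact hFdeg)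
  rw [hcard, hFcoeff] at hkey
  rw [Fintype.sum_sum_type, Fintype.sum_bool] at hkey
  -- the u-node terms
  have hterm : ∀ n : Fin N,
      F.eval (v (Sum.inl n)) *
        (∏ m ∈ (univ : Finset (Fin N ⊕ Bool)).erase (Sum.inl n), (v (Sum.inl n) - v m))⁻¹
      = A12res u q w a n / ((u n - q j) * (u n - q i)) := by
    intro n
    have hprod : ∏ m ∈ (univ : Finset (Fin N ⊕ Bool)).erase (Sum.inl n),
        (v (Sum.inl n) - v m)
        = (∏ m ∈ univ.erase n, (u n - u m)) * ((u n - q i) * (u n - q j)) := by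
      rw [← Finset.univ_disjSum_univ, erase_disjSum_inl, Finset.prod_disjSum]
      simp [hv, Fintype.prod_bool]
    have hFn : F.eval (u n) =
        (∑ k, (1 / (u n - q k) + a k) * (∏ β ∈ univ.erase k, (u n - q β)) /
          (w k * D k)) * ∏ β, (u n - q β) := by
      rw [hFeval, Finset.sum_mul]
      refine Finset.sum_congr rfl fun k _ => ?_
      rw [← Finset.mul_prod_erase _ _ (mem_univ k)]
      have h1 := huq n k
      have h2 : w k * D k ≠ 0 := mul_ne_zero (hw0 k) (hD0 k)
      field_simp
    have hA : A12res u q w a n = F.eval (u n) / (∏ m ∈ univ.erase n, (u n - u m)) := by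
      rw [A12res, hFn, hD]
    rw [hprod, hA]
    simp only [hv, Sum.elim_inl]
    rw [mul_inv, mul_inv]
    field_simp
  -- the q-node terms
  have hqnode : ∀ (b : Bool) (k l : Fin g), k ≠ l → v (Sum.inr b) = q k →
      (∀ b' : Bool, b' ≠ b → v (Sum.inr b') = q l) →
      F.eval (v (Sum.inr b)) *
        (∏ m ∈ (univ : Finset (Fin N ⊕ Bool)).erase (Sum.inr b), (v (Sum.inr b) - v m))⁻¹
      = w k * D k / (q k - q l) := by
    intro b k l hkl hb hb'
    have hqkl : q k - q l ≠ 0 := sub_ne_zero.mpr (hq k l hkl)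
    have hprod : ∏ m ∈ (univ : Finset (Fin N ⊕ Bool)).erase (Sum.inr b),
        (v (Sum.inr b) - v m)
        = (∏ m, (q k - u m)) * (q k - q l) := by
      rw [← Finset.univ_disjSum_univ, erase_disjSum_inr, Finset.prod_disjSum]
      have e1 : (univ : Finset Bool).erase b = {!b} := by rcases b <;> decide
      rw [e1, Finset.prod_singleton, hb, hb' (!b) (by rcases b <;> decide)]
      simp [hv]
    have hFk : F.eval (q k) = (w k * D k)⁻¹ * D k ^ 2 := by
      rw [hFeval]
      rw [Finset.sum_eq_single k]
      · simp [hD]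
      · intro k' _ hk'
        have h0 : (∏ β ∈ univ.erase k', (q k - q β)) = 0 :=
          Finset.prod_eq_zero (Finset.mem_erase.mpr ⟨fun h => hk' h.symm, mem_univ k⟩)
            (sub_self _)
        rw [h0]
        ring
      · intro h; exact absurd (mem_univ k) h
    have hP2 : (∏ m, (q k - u m)) = (w k ^ 2)⁻¹ := by rw [← hwsq k, inv_inv]
    rw [hprod, hb, hFk, hP2, mul_inv ((w k ^ 2)⁻¹) (q k - q l), inv_inv, div_eq_mul_inv]
    field_simp [hw0 k, hD0 k]
  have htermi : F.eval (v (Sum.inr true)) *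
      (∏ m ∈ (univ : Finset (Fin N ⊕ Bool)).erase (Sum.inr true),
        (v (Sum.inr true) - v m))⁻¹ = w i * D i / (q i - q j) := by
    apply hqnode true i j hij (by simp [hv])
    intro b' hb'
    rcases b'
    · simp [hv]
    · exact absurd rfl hb'
  have htermj : F.eval (v (Sum.inr false)) *
      (∏ m ∈ (univ : Finset (Fin N ⊕ Bool)).erase (Sum.inr false),
        (v (Sum.inr false) - v m))⁻¹ = w j * D j / (q j - q i) := by
    apply hqnode false j i hij.symm (by simp [hv])
    intro b' hb'
    rcases b'
    · exact absurd rfl hb'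
    · simp [hv]
  simp only [hterm, htermi, htermj] at hkey
  have hsum : ∑ n, A12res u q w a n / ((u n - q j) * (u n - q i))
      = -(w i * D i / (q i - q j) + w j * D j / (q j - q i)) :=
    eq_neg_of_add_eq_zero_left hkey
  rw [hsum]
  field_simp
  ring
end

section
/- In the setting of the hyperelliptic residue data, for every index j ∈ {1,…,g}: Σ_{n=1}^N A12_n/(u_n − q_j)² = −w_j·∏_{β≠j}(q_j − q_β)·(α_j + 2·Σ_{β≠j} 1/(q_j − q_β) − Σ_{m=1}^N 1/(q_j − u_m)). -/
open Finset

open Polynomial Lagrange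


-- Lagrange coefficient form
lemma lag_coeff {N : ℕ} (u : Fin N → ℂ) (hu : Function.Injective u)
    (p : ℂ[X]) (hdeg : p.degree < N) :
    p = ∑ n : Fin N, C (p.eval (u n) / eval (u n) (nodal (univ.erase n) u)) *
      nodal (univ.erase n) u := by
  have hinj : Set.InjOn u (univ : Finset (Fin N)) := fun x _ y _ h => hu h
  have hcard : (univ : Finset (Fin N)).card = N := by simp
  have h := Lagrange.eq_interpolate hinj (by rw [hcard]; exact hdeg)
  conv_lhs => rw [h]
  rw [interpolate_apply]
  refine Finset.sum_congr rfl fun n _ => ?_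
  rw [basis_eq_prod_sub_inv_mul_nodal_div (mem_univ n),
    ← nodal_erase_eq_nodal_div (mem_univ n), nodalWeight_eq_eval_nodal_erase_inv,
    ← mul_assoc, ← C_mul, div_eq_mul_inv]

lemma key_identity {N : ℕ} (u : Fin N → ℂ) (n : Fin N) :
    nodal (univ.erase n) u * derivative (nodal univ u)
      - derivative (nodal (univ.erase n) u) * nodal univ u
      = (nodal (univ.erase n) u) ^ 2 := by
  have h : nodal (univ : Finset (Fin N)) u
      = (X - C (u n)) * nodal (univ.erase n) u := nodal_eq_mul_nodal_erase (mem_univ n)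
  rw [h, derivative_mul]
  simp only [derivative_sub, derivative_X, derivative_C, sub_zero]
  ring

lemma key_sum {N : ℕ} (u : Fin N → ℂ) (hu : Function.Injective u)
    (p : ℂ[X]) (hdeg : p.degree < N) (x : ℂ) (hx : ∀ n, x ≠ u n) :
    ∑ n, p.eval (u n) / ((u n - x) ^ 2 * ∏ m ∈ univ.erase n, (u n - u m)) =
      (p.eval x * (derivative (nodal univ u)).eval x
        - (derivative p).eval x * (nodal univ u).eval x) / ((nodal univ u).eval x) ^ 2 := by
  set c : Fin N → ℂ := fun n => p.eval (u n) / eval (u n) (nodal (univ.erase n) u) with hc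
  have hp : p = ∑ n : Fin N, C (c n) * nodal (univ.erase n) u := lag_coeff u hu p hdeg
  have hderiv : derivative p = ∑ n, C (c n) * derivative (nodal (univ.erase n) u) := by
    conv_lhs => rw [hp]
    rw [derivative_sum]
    exact Finset.sum_congr rfl fun n _ => by rw [derivative_mul, derivative_C, zero_mul, zero_add]
  have hkey : p * derivative (nodal univ u) - derivative p * nodal univ u
      = ∑ n, C (c n) * (nodal (univ.erase n) u) ^ 2 := by
    rw [hderiv]
    conv_lhs => rw [hp]
    rw [Finset.sum_mul, Finset.sum_mul, ← Finset.sum_sub_distrib]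
    refine Finset.sum_congr rfl fun n _ => ?_
    rw [mul_assoc, mul_assoc, ← mul_sub, key_identity]
  have hkeyx := congrArg (eval x) hkey
  simp only [eval_sub, eval_mul, eval_finset_sum, eval_pow, eval_C] at hkeyx
  have hUx : eval x (nodal (univ : Finset (Fin N)) u) ≠ 0 :=
    eval_nodal_not_at_node (fun i _ => hx i)
  rw [hkeyx, Finset.sum_div]
  refine Finset.sum_congr rfl fun n _ => ?_
  have hNn : eval x (nodal (univ : Finset (Fin N)) u)
      = (x - u n) * eval x (nodal (univ.erase n) u) := by
    rw [nodal_eq_mul_nodal_erase (mem_univ n)]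
    simp
  have hxu : u n - x ≠ 0 := sub_ne_zero_of_ne fun h => hx n h.symm
  have hEn : eval (u n) (nodal (univ.erase n) u) = ∏ m ∈ univ.erase n, (u n - u m) := eval_nodal
  have hEn0 : eval (u n) (nodal (univ.erase n) u) ≠ 0 := by
    rw [hEn]
    exact Finset.prod_ne_zero_iff.2 fun m hm =>
      sub_ne_zero_of_ne (hu.ne (Ne.symm (Finset.mem_erase.1 hm).1))
  have hEx0 : eval x (nodal (univ.erase n) u) ≠ 0 := by
    rw [eval_nodal]
    exact Finset.prod_ne_zero_iff.2 fun m _ => sub_ne_zero_of_ne (hx m)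
  rw [hNn, hc, ← hEn]
  have h2 : ((x - u n) * eval x (nodal (univ.erase n) u)) ^ 2
      = (u n - x) ^ 2 * (eval x (nodal (univ.erase n) u)) ^ 2 := by ring
  rw [h2]
  field_simp

noncomputable def Fpoly {g : ℕ} (q w a : Fin g → ℂ) : ℂ[X] :=
  ∑ k, C (1 / (w k * ∏ β ∈ univ.erase k, (q k - q β))) *
    ((nodal (univ.erase k) q) ^ 2 + C (a k) * (nodal (univ.erase k) q * nodal univ q))

lemma A12_eq {g N : ℕ} (u : Fin N → ℂ) (q w a : Fin g → ℂ)
    (hqu : ∀ (j : Fin g) (n : Fin N), q j ≠ u n) (n : Fin N) :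
    A12res u q w a n = (Fpoly q w a).eval (u n) / ∏ m ∈ univ.erase n, (u n - u m) := by
  unfold A12res Fpoly
  have h : (∑ k, (1 / (u n - q k) + a k) * (∏ β ∈ univ.erase k, (u n - q β)) /
      (w k * ∏ β ∈ univ.erase k, (q k - q β))) * (∏ β, (u n - q β))
      = eval (u n) (∑ k, C (1 / (w k * ∏ β ∈ univ.erase k, (q k - q β))) *
        ((nodal (univ.erase k) q) ^ 2 +
          C (a k) * (nodal (univ.erase k) q * nodal univ q))) := by
    rw [eval_finset_sum, Finset.sum_mul]
    refine Finset.sum_congr rfl fun k _ => ?_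
    simp only [eval_mul, eval_add, eval_pow, eval_C, eval_nodal]
    have hc : u n - q k ≠ 0 := sub_ne_zero_of_ne fun h => (hqu k n) h.symm
    have hPn : (∏ β, (u n - q β)) = (u n - q k) * ∏ β ∈ univ.erase k, (u n - q β) :=
      (Finset.mul_prod_erase univ _ (mem_univ k)).symm
    rw [hPn, div_mul_eq_mul_div, one_div_mul_eq_div]
    congr 1
    field_simp
  rw [← h]

lemma Fpoly_eval {g : ℕ} (q w a : Fin g → ℂ)
    (hq : ∀ i j : Fin g, i ≠ j → q i ≠ q j) (hw0 : ∀ k, w k ≠ 0) (j : Fin g) :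
    (Fpoly q w a).eval (q j) = (∏ β ∈ univ.erase j, (q j - q β)) / w j := by
  have hD0 : (∏ β ∈ univ.erase j, (q j - q β)) ≠ 0 :=
    Finset.prod_ne_zero_iff.2 fun β hβ =>
      sub_ne_zero_of_ne (hq j β (Ne.symm (Finset.mem_erase.1 hβ).1))
  rw [Fpoly, eval_finset_sum]
  rw [Finset.sum_eq_single_of_mem j (mem_univ j)]
  · simp only [eval_mul, eval_add, eval_pow, eval_C, eval_nodal,
      eval_nodal_at_node (mem_univ j), mul_zero, add_zero]
    rw [one_div_mul_eq_div, sq, mul_comm (w j), ← div_div, mul_div_assoc, div_self hD0, mul_one]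
  · intro k _ hkj
    have h0 : eval (q j) (nodal (univ.erase k) q) = 0 :=
      eval_nodal_at_node (Finset.mem_erase.2 ⟨hkj.symm, mem_univ j⟩)
    simp [h0]

lemma Fpoly_deriv_eval {g : ℕ} (q w a : Fin g → ℂ)
    (hq : ∀ i j : Fin g, i ≠ j → q i ≠ q j) (hw0 : ∀ k, w k ≠ 0) (j : Fin g) :
    (derivative (Fpoly q w a)).eval (q j) =
      (∏ β ∈ univ.erase j, (q j - q β)) *
        (2 * (∑ β ∈ univ.erase j, 1 / (q j - q β)) + a j) / w j := by
  have hD0 : (∏ β ∈ univ.erase j, (q j - q β)) ≠ 0 :=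
    Finset.prod_ne_zero_iff.2 fun β hβ =>
      sub_ne_zero_of_ne (hq j β (Ne.symm (Finset.mem_erase.1 hβ).1))
  have hEj' : eval (q j) (derivative (nodal (univ.erase j) q))
      = (∏ β ∈ univ.erase j, (q j - q β)) * ∑ β ∈ univ.erase j, 1 / (q j - q β) := by
    rw [derivative_nodal, eval_finset_sum, Finset.mul_sum]
    refine Finset.sum_congr rfl fun β hβ => ?_
    have hne : q j - q β ≠ 0 :=
      sub_ne_zero_of_ne (hq j β (Ne.symm (Finset.mem_erase.1 hβ).1))
    rw [eval_nodal, mul_one_div, eq_div_iff hne, mul_comm]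
    exact Finset.mul_prod_erase (univ.erase j) (fun γ => q j - q γ) hβ
  have hP' : eval (q j) (derivative (nodal (univ : Finset (Fin g)) q))
      = ∏ β ∈ univ.erase j, (q j - q β) := by
    rw [eval_nodal_derivative_eval_node_eq (mem_univ j), eval_nodal]
  rw [Fpoly, derivative_sum, eval_finset_sum]
  rw [Finset.sum_eq_single_of_mem j (mem_univ j)]
  · simp only [derivative_mul, derivative_C, zero_mul, zero_add, derivative_add,
      derivative_pow, eval_mul, eval_add, eval_pow, eval_C, eval_nodal,
      eval_nodal_at_node (mem_univ j), hEj', hP', mul_zero, zero_add,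
      Nat.cast_ofNat, pow_one]
    rw [eq_div_iff (hw0 j), one_div, mul_comm (w j)]
    have hDi : (∏ β ∈ univ.erase j, (q j - q β)) * (∏ β ∈ univ.erase j, (q j - q β))⁻¹ = 1 :=
      mul_inv_cancel₀ hD0
    have hWi : w j * (w j)⁻¹ = 1 := mul_inv_cancel₀ (hw0 j)
    field_simp
    rw [show (2:ℕ) - 1 = 1 from rfl, pow_one, mul_div_cancel_left₀ _ (hw0 j)]
    ring
  · intro k _ hkj
    have h0 : eval (q j) (nodal (univ.erase k) q) = 0 :=
      eval_nodal_at_node (Finset.mem_erase.2 ⟨hkj.symm, mem_univ j⟩)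
    simp [derivative_mul, derivative_pow, h0, eval_nodal_at_node (mem_univ j)]

lemma Fpoly_degree_lt {g : ℕ} (q w a : Fin g → ℂ) :
    (Fpoly q w a).degree < ((2 * g + 1 : ℕ) : WithBot ℕ) := by
  apply lt_of_le_of_lt (degree_sum_le _ _)
  rw [Finset.sup_lt_iff (by exact WithBot.bot_lt_coe _)]
  intro k _
  have hEk : (nodal (univ.erase k) q).degree = ((g - 1 : ℕ) : WithBot ℕ) := by
    rw [degree_nodal, card_erase_of_mem (mem_univ k)]
    simp
  have hP : (nodal (univ : Finset (Fin g)) q).degree = ((g : ℕ) : WithBot ℕ) := by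
    rw [degree_nodal]
    simp
  have hsum : degree ((nodal (univ.erase k) q) ^ 2
      + C (a k) * (nodal (univ.erase k) q * nodal univ q)) < ((2 * g + 1 : ℕ) : WithBot ℕ) := by
    apply lt_of_le_of_lt (degree_add_le _ _)
    apply max_lt
    · rw [pow_two, degree_mul, hEk, ← Nat.cast_add]
      exact_mod_cast (by omega : (g - 1) + (g - 1) < 2 * g + 1)
    · apply lt_of_le_of_lt (degree_mul_le _ _)
      have h2 : degree (nodal (univ.erase k) q * nodal (univ : Finset (Fin g)) q)
          = (((g - 1) + g : ℕ) : WithBot ℕ) := by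
        rw [degree_mul, hEk, hP, ← Nat.cast_add]
      calc degree (C (a k)) + degree (nodal (univ.erase k) q * nodal univ q)
          ≤ 0 + (((g - 1) + g : ℕ) : WithBot ℕ) := by
            exact add_le_add degree_C_le (le_of_eq h2)
        _ = (((g - 1) + g : ℕ) : WithBot ℕ) := zero_add _
        _ < ((2 * g + 1 : ℕ) : WithBot ℕ) := by
            exact_mod_cast (by omega : (g - 1) + g < 2 * g + 1)
  apply lt_of_le_of_lt (degree_mul_le _ _)
  calc degree (C (1 / (w k * ∏ β ∈ univ.erase k, (q k - q β)))) +
        degree ((nodal (univ.erase k) q) ^ 2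
          + C (a k) * (nodal (univ.erase k) q * nodal univ q))
      ≤ 0 + degree ((nodal (univ.erase k) q) ^ 2
          + C (a k) * (nodal (univ.erase k) q * nodal univ q)) :=
        add_le_add degree_C_le le_rfl
    _ = _ := zero_add _
    _ < _ := hsum


/-- In the setting of the hyperelliptic residue data, for every `j`,
`Σ_n A12_n/(u_n − q_j)²
  = −w_j·∏_{β≠j}(q_j − q_β)·(α_j + 2·Σ_{β≠j} 1/(q_j − q_β) − Σ_m 1/(q_j − u_m))`. -/
theorem sum_A12_second_order_pole {g N : ℕ} (hg : 1 ≤ g) (hN : N = 2 * g + 1)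
    (u : Fin N → ℂ) (q w a : Fin g → ℂ)
    (hu : ∀ m n : Fin N, m ≠ n → u m ≠ u n)
    (hq : ∀ i j : Fin g, i ≠ j → q i ≠ q j)
    (hqu : ∀ (j : Fin g) (n : Fin N), q j ≠ u n)
    (hw : ∀ j, (w j) ^ 2 * ∏ m, (q j - u m) = 1)
    (j : Fin g) :
    ∑ n, A12res u q w a n / (u n - q j) ^ 2 =
      -(w j * ∏ β ∈ univ.erase j, (q j - q β)) *
        (a j + 2 * (∑ β ∈ univ.erase j, 1 / (q j - q β)) - ∑ m, 1 / (q j - u m)) := by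
  have hw0 : ∀ k, w k ≠ 0 := by
    intro k hk
    have := hw k
    rw [hk] at this
    simp at this
  have hD0 : (∏ β ∈ univ.erase j, (q j - q β)) ≠ 0 :=
    Finset.prod_ne_zero_iff.2 fun β hβ =>
      sub_ne_zero_of_ne (hq j β (Ne.symm (Finset.mem_erase.1 hβ).1))
  have huinj : Function.Injective u := by
    intro m n h
    by_contra hmn
    exact hu m n hmn h
  have hL : ∀ n : Fin N, A12res u q w a n / (u n - q j) ^ 2
      = (Fpoly q w a).eval (u n) / ((u n - q j) ^ 2 * ∏ m ∈ univ.erase n, (u n - u m)) := by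
    intro n
    rw [A12_eq u q w a hqu n, div_div, mul_comm]
  rw [Finset.sum_congr rfl fun n _ => hL n]
  rw [key_sum u huinj (Fpoly q w a) (hN ▸ Fpoly_degree_lt q w a) (q j) (hqu j)]
  have hU : eval (q j) (nodal (univ : Finset (Fin N)) u) = ∏ m, (q j - u m) := eval_nodal
  have hU0 : (∏ m, (q j - u m)) ≠ 0 :=
    Finset.prod_ne_zero_iff.2 fun m _ => sub_ne_zero_of_ne (hqu j m)
  have hU' : eval (q j) (derivative (nodal (univ : Finset (Fin N)) u))
      = (∏ m, (q j - u m)) * ∑ m, 1 / (q j - u m) := by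
    rw [derivative_nodal, eval_finset_sum, Finset.mul_sum]
    refine Finset.sum_congr rfl fun m _ => ?_
    have hne : q j - u m ≠ 0 := sub_ne_zero_of_ne (hqu j m)
    rw [eval_nodal, mul_one_div, eq_div_iff hne, mul_comm]
    exact Finset.mul_prod_erase univ (fun l => q j - u l) (mem_univ m)
  rw [hU, hU', Fpoly_eval q w a hq hw0 j, Fpoly_deriv_eval q w a hq hw0 j]
  have hUe : (∏ m, (q j - u m)) = 1 / (w j) ^ 2 :=
    eq_one_div_of_mul_eq_one_left (by rw [mul_comm]; exact hw j)
  rw [hUe]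
  have hWi : w j * (w j)⁻¹ = 1 := mul_inv_cancel₀ (hw0 j)
  set S1 := ∑ β ∈ univ.erase j, 1 / (q j - q β) with hS1
  set S2 := ∑ m : Fin N, 1 / (q j - u m) with hS2
  set D := ∏ β ∈ univ.erase j, (q j - q β) with hD
  field_simp
  ring
end

section
/- Let g ≥ 1 and let A, B, C, D be g×g complex matrices such that the 2g×2g block matrix M = [[A,B],[C,D]] is symplectic, i.e. Mᵗ·J·M = J where J = [[0, I],[−I, 0]] (equivalently: AᵗC = CᵗA, BᵗD = DᵗB, and AᵗD − CᵗB = I). Let 𝔹 be a symmetric g×g complex matrix such that C𝔹 + D is invertible, and let c₁, c₂ ∈ ℂ^g. Set 𝔹̃ := (A𝔹 + B)(C𝔹 + D)⁻¹, c̃₁ := A·c₁ − B·c₂, and c̃₂ := D·c₂ − C·c₁. Then c̃₁ + 𝔹̃·c̃₂ = ((C𝔹 + D)⁻¹)ᵗ·(c₁ + 𝔹·c₂). (This is the transformation rule for the coordinates of a point of the Jacobian with respect to the lattice under a symplectic change of the canonical homology basis.) -/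
open Matrix

/-- Transformation rule for the coordinates of a point of the Jacobian with respect to the
lattice under a symplectic change of the canonical homology basis: if `M = [[A,B],[C,D]]`
is symplectic, `𝔹` is symmetric with `C𝔹 + D` invertible,
`𝔹̃ = (A𝔹 + B)(C𝔹 + D)⁻¹`, `c̃₁ = A·c₁ − B·c₂` and `c̃₂ = D·c₂ − C·c₁`, then
`c̃₁ + 𝔹̃·c̃₂ = ((C𝔹 + D)⁻¹)ᵗ·(c₁ + 𝔹·c₂)`. -/
theorem jacobian_coordinates_transform {g : ℕ} (hg : 1 ≤ g)
    (A B C D RB : Matrix (Fin g) (Fin g) ℂ)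
    (hsymp : (Matrix.fromBlocks A B C D)ᵀ * Matrix.fromBlocks 0 1 (-1) 0 *
        Matrix.fromBlocks A B C D = Matrix.fromBlocks 0 1 (-1) 0)
    (hRB : RB.IsSymm) (hinv : IsUnit (C * RB + D)) (c₁ c₂ : Fin g → ℂ) :
    (A *ᵥ c₁ - B *ᵥ c₂) +
        ((A * RB + B) * (C * RB + D)⁻¹) *ᵥ (D *ᵥ c₂ - C *ᵥ c₁) =
      ((C * RB + D)⁻¹)ᵀ *ᵥ (c₁ + RB *ᵥ c₂) := by
  rw [Matrix.fromBlocks_transpose, Matrix.fromBlocks_multiply,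
    Matrix.fromBlocks_multiply, Matrix.fromBlocks_inj] at hsymp
  obtain ⟨h11, h12, h21, h22⟩ := hsymp
  simp only [Matrix.mul_zero, Matrix.zero_mul, Matrix.mul_one, Matrix.one_mul,
    Matrix.mul_neg, Matrix.neg_mul, zero_add, add_zero, Matrix.mul_zero] at h11 h12 h21 h22
  -- h11 : Aᵀ*C + -(Cᵀ*A) = 0 etc (exact shapes to be fixed)
  have hAC : Aᵀ * C = Cᵀ * A := by linear_combination (norm := noncomm_ring) h11
  have hBD : Bᵀ * D = Dᵀ * B := by linear_combination (norm := noncomm_ring) h22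
  have hAD : Aᵀ * D - Cᵀ * B = 1 := by linear_combination (norm := noncomm_ring) h12
  have hDA : Dᵀ * A - Bᵀ * C = 1 := by
    have := congrArg Matrix.transpose hAD
    simpa [Matrix.transpose_sub, Matrix.transpose_mul] using this
  set E := C * RB + D with hE
  have hRB' : RBᵀ = RB := hRB
  have hdet : IsUnit E.det := (Matrix.isUnit_iff_isUnit_det E).mp hinv
  have hEinv : E * E⁻¹ = 1 := Matrix.mul_nonsing_inv E hdet
  have hsymmE : Eᵀ * (A * RB + B) = (A * RB + B)ᵀ * E := by
    simp only [hE, Matrix.transpose_add, Matrix.transpose_mul, hRB']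
    have : (RB * Cᵀ + Dᵀ) * (A * RB + B) - (RB * Aᵀ + Bᵀ) * (C * RB + D)
        = RB * (Cᵀ * A - Aᵀ * C) * RB + RB * (Cᵀ * B - Aᵀ * D) + (Dᵀ * A - Bᵀ * C) * RB
          + (Dᵀ * B - Bᵀ * D) := by noncomm_ring
    have h2 : Cᵀ * B - Aᵀ * D = -1 := by linear_combination (norm := noncomm_ring) -hAD
    rw [← sub_eq_zero, this, hAC, hDA, h2, hBD]
    noncomm_ring
  have key1 : A - (A * RB + B) * E⁻¹ * C = (E⁻¹)ᵀ := by
    have h : Eᵀ * (A - (A * RB + B) * E⁻¹ * C) = 1 := by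
      have : Eᵀ * ((A * RB + B) * E⁻¹ * C) = (A * RB + B)ᵀ * C := by
        calc Eᵀ * ((A * RB + B) * E⁻¹ * C) = (Eᵀ * (A * RB + B)) * E⁻¹ * C := by noncomm_ring
        _ = (A * RB + B)ᵀ * E * E⁻¹ * C := by rw [hsymmE]
        _ = (A * RB + B)ᵀ * C := by rw [Matrix.mul_assoc ((A * RB + B)ᵀ), hEinv]; noncomm_ring
      rw [Matrix.mul_sub, this]
      have expand : Eᵀ * A - (A * RB + B)ᵀ * C
          = RB * (Cᵀ * A - Aᵀ * C) + (Dᵀ * A - Bᵀ * C) := by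
        simp only [hE, Matrix.transpose_add, Matrix.transpose_mul, hRB']
        noncomm_ring
      rw [expand, hAC, hDA]; noncomm_ring
    have hdetT : IsUnit Eᵀ.det := by rwa [Matrix.det_transpose]
    have := congrArg (fun X => (Eᵀ)⁻¹ * X) h
    simpa [← Matrix.mul_assoc, Matrix.nonsing_inv_mul Eᵀ hdetT,
      Matrix.transpose_nonsing_inv] using this
  have key2 : (A * RB + B) * E⁻¹ * D - B = (E⁻¹)ᵀ * RB := by
    have h : Eᵀ * ((A * RB + B) * E⁻¹ * D - B) = RB := by
      have : Eᵀ * ((A * RB + B) * E⁻¹ * D) = (A * RB + B)ᵀ * D := by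
        calc Eᵀ * ((A * RB + B) * E⁻¹ * D) = (Eᵀ * (A * RB + B)) * E⁻¹ * D := by noncomm_ring
        _ = (A * RB + B)ᵀ * E * E⁻¹ * D := by rw [hsymmE]
        _ = (A * RB + B)ᵀ * D := by rw [Matrix.mul_assoc ((A * RB + B)ᵀ), hEinv]; noncomm_ring
      rw [Matrix.mul_sub, this]
      have expand : (A * RB + B)ᵀ * D - Eᵀ * B
          = RB * (Aᵀ * D - Cᵀ * B) + (Bᵀ * D - Dᵀ * B) := by
        simp only [hE, Matrix.transpose_add, Matrix.transpose_mul, hRB']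
        noncomm_ring
      rw [expand, hAD, hBD]; noncomm_ring
    have hdetT : IsUnit Eᵀ.det := by rwa [Matrix.det_transpose]
    have := congrArg (fun X => (Eᵀ)⁻¹ * X) h
    simpa [← Matrix.mul_assoc, Matrix.nonsing_inv_mul Eᵀ hdetT,
      Matrix.transpose_nonsing_inv] using this
  calc (A *ᵥ c₁ - B *ᵥ c₂) + ((A * RB + B) * E⁻¹) *ᵥ (D *ᵥ c₂ - C *ᵥ c₁)
      = (A - (A * RB + B) * E⁻¹ * C) *ᵥ c₁ + ((A * RB + B) * E⁻¹ * D - B) *ᵥ c₂ := by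
        simp only [Matrix.sub_mulVec, Matrix.add_mulVec, Matrix.mulVec_sub,
          ← Matrix.mulVec_mulVec]
        abel
    _ = (E⁻¹)ᵀ *ᵥ c₁ + ((E⁻¹)ᵀ * RB) *ᵥ c₂ := by rw [key1, key2]
    _ = (E⁻¹)ᵀ *ᵥ (c₁ + RB *ᵥ c₂) := by
        rw [Matrix.mulVec_add, Matrix.mulVec_mulVec]
end

section
/- Fix g ≥ 1, N := 2g+1, distinct indices k ≠ n in {1,…,N}, complex constants u_m (m ≠ k), a point t₀ ∈ ℂ, a constant Ω_∞ ∈ ℂ, and functions q₁,…,q_g, w₁,…,w_g, Ω_n, Ω_k, f_n, f_k : ℂ → ℂ of a single complex variable t (representing the moving branch point u_k). Write u_k := t₀ and assume: u₁,…,u_N are pairwise distinct; q₁(t₀),…,q_g(t₀) are pairwise distinct and distinct from all u_m; w_j(t₀) ≠ 0 for all j; f_n(t₀) ≠ 0 and f_k(t₀) ≠ 0. Assume the following derivative hypotheses at t₀ (all values taken at t₀): q_j′ = −(1/4)·Ω_k·f_k·∏_{α≠j}(u_k − q_α)/(w_j·∏_{α≠j}(q_j − q_α)) for every j; Ω_n′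 = (1/2)·(Ω_k/(u_k − u_n))·(f_k/f_n)·∏_{α=1}^g(u_k − q_α)/∏_{α=1}^g(u_n − q_α); and f_n′ = (1/2)·f_n/(u_n − u_k). Define A12_n := (1/4)·Ω_n·f_n·∏_{α=1}^g(u_n − q_α), A12_k := (1/4)·Ω_k·f_k·∏_{α=1}^g(u_k − q_α), β_n := A12_n·(Σ_{j=1}^g 1/(w_j·(u_n − q_j)·∏_{β≠j}(q_j − q_β)) − Ω_∞/2), and β_k := A12_k·(Σ_{j=1}^g 1/(w_j·(u_k − q_j)·∏_{β≠j}(q_j − q_β)) − Ω_∞/2). Then the function t ↦ (1/4)·Ω_n(t)·f_n(t)·∏_{α=1}^g(u_n − q_α(t)) has complex derivative at t₀ equal to (A12_k·(β_n + 1/2) − A12_n·(β_k + 1/2))/(u_k − u_n). -/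
open Finset

private lemma key_term (a b c d W D e f xn xk : ℂ) (hW : W ≠ 0) (hD : D ≠ 0)
    (hxn : xn ≠ 0) (hxk : xk ≠ 0) (hne : xk - xn ≠ 0) :
    (1 / 4 * c * d * (xk * f) * (1 / 4 * a * b * (xn * e) * (1 / (W * xn * D))) -
        1 / 4 * a * b * (xn * e) * (1 / 4 * c * d * (xk * f) * (1 / (W * xk * D)))) /
      (xk - xn)
      = 1 / 4 * a * b * (e * (0 - -(1 / 4) * c * d * f / (W * D))) := by
  have e1 : 1 / 4 * c * d * (xk * f) * (1 / 4 * a * b * (xn * e) * (1 / (W * xn * D)))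
      = 1 / 16 * a * b * c * d * e * f * xk / (W * D) * (xn / xn) := by ring
  have e2 : 1 / 4 * a * b * (xn * e) * (1 / 4 * c * d * (xk * f) * (1 / (W * xk * D)))
      = 1 / 16 * a * b * c * d * e * f * xn / (W * D) * (xk / xk) := by ring
  rw [e1, e2, div_self hxn, div_self hxk]
  have e3 : (1 / 16 * a * b * c * d * e * f * xk / (W * D) * 1 -
        1 / 16 * a * b * c * d * e * f * xn / (W * D) * 1) / (xk - xn)
      = 1 / 16 * a * b * c * d * e * f / (W * D) * ((xk - xn) / (xk - xn)) := by ring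
  rw [e3, div_self hne]
  ring

private lemma key_rest (a b c d Pk Pn s : ℂ) (hb : b ≠ 0) (hPn : Pn ≠ 0) (hs : s ≠ 0) :
    (1 / 4 * c * d * Pk - 1 / 4 * a * b * Pn) / 2 / s
      = (1 / 4 * (1 / 2 * (c / s) * (d / b) * Pk / Pn) * b + 1 / 4 * a * (1 / 2 * b / (-s)))
        * Pn := by
  have e1 : 1 / 4 * (1 / 2 * (c / s) * (d / b) * Pk / Pn) * b * Pn
      = c * d * Pk / (8 * s) * (b / b) * (Pn / Pn) := by ring
  rw [add_mul, e1, div_self hb, div_self hPn]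
  ring

/-- Derivative of the residue `A12_n = (1/4)·Ω_n·f_n·∏_α(u_n − q_α)` as the branch point
`u_k` moves: under the variational formulas for `q_j`, `Ω_n` and `f_n` established in the
paper, `∂A12_n/∂u_k = (A12_k·(β_n + 1/2) − A12_n·(β_k + 1/2))/(u_k − u_n)`. -/
theorem A12_derivative {g N : ℕ} (hg : 1 ≤ g) (hN : N = 2 * g + 1)
    (k n : Fin N) (hkn : k ≠ n) (u : Fin N → ℂ)
    (q w : Fin g → ℂ → ℂ) (Ωn Ωk fn fk : ℂ → ℂ) (Ωinf : ℂ)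
    (hu : ∀ m m' : Fin N, m ≠ m' → u m ≠ u m')
    (hq : ∀ i j : Fin g, i ≠ j → q i (u k) ≠ q j (u k))
    (hqu : ∀ (j : Fin g) (m : Fin N), q j (u k) ≠ u m)
    (hw : ∀ j, w j (u k) ≠ 0)
    (hfn : fn (u k) ≠ 0) (hfk : fk (u k) ≠ 0)
    (hdq : ∀ j : Fin g, HasDerivAt (q j)
      (-(1 / 4) * Ωk (u k) * fk (u k) *
        (∏ α ∈ univ.erase j, (u k - q α (u k))) /
        (w j (u k) * ∏ α ∈ univ.erase j, (q j (u k) - q α (u k)))) (u k))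
    (hdΩ : HasDerivAt Ωn
      ((1 / 2) * (Ωk (u k) / (u k - u n)) * (fk (u k) / fn (u k)) *
        (∏ α, (u k - q α (u k))) / ∏ α, (u n - q α (u k))) (u k))
    (hdf : HasDerivAt fn ((1 / 2) * fn (u k) / (u n - u k)) (u k)) :
    HasDerivAt (fun t => (1 / 4) * Ωn t * fn t * ∏ α, (u n - q α t))
      ((((1 / 4) * Ωk (u k) * fk (u k) * ∏ α, (u k - q α (u k))) *
          (((1 / 4) * Ωn (u k) * fn (u k) * ∏ α, (u n - q α (u k))) *
            ((∑ j, 1 / (w j (u k) * (u n - q j (u k)) *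
              ∏ β ∈ univ.erase j, (q j (u k) - q β (u k)))) - Ωinf / 2) + 1 / 2) -
        ((1 / 4) * Ωn (u k) * fn (u k) * ∏ α, (u n - q α (u k))) *
          (((1 / 4) * Ωk (u k) * fk (u k) * ∏ α, (u k - q α (u k))) *
            ((∑ j, 1 / (w j (u k) * (u k - q j (u k)) *
              ∏ β ∈ univ.erase j, (q j (u k) - q β (u k)))) - Ωinf / 2) + 1 / 2)) /
        (u k - u n)) (u k) := by
  classical
  have hkn' : u k - u n ≠ 0 := sub_ne_zero.mpr (hu k n hkn)
  have hxn : ∀ j : Fin g, u n - q j (u k) ≠ 0 :=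
    fun j => sub_ne_zero.mpr (Ne.symm (hqu j n))
  have hxk : ∀ j : Fin g, u k - q j (u k) ≠ 0 :=
    fun j => sub_ne_zero.mpr (Ne.symm (hqu j k))
  have hD : ∀ j : Fin g, (∏ β ∈ univ.erase j, (q j (u k) - q β (u k))) ≠ 0 := by
    intro j
    refine Finset.prod_ne_zero_iff.mpr fun β hβ => sub_ne_zero.mpr ?_
    exact hq j β (Ne.symm (Finset.ne_of_mem_erase hβ))
  have hPn0 : (∏ α, (u n - q α (u k))) ≠ 0 :=
    Finset.prod_ne_zero_iff.mpr fun j _ => hxn j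
  set c := Ωk (u k) with hc
  set d := fk (u k) with hd
  -- the derivative of the product
  have hP : HasDerivAt (fun t => ∏ α, (u n - q α t))
      (∑ j, (∏ α ∈ univ.erase j, (u n - q α (u k))) *
        (0 - (-(1 / 4) * c * d * (∏ α ∈ univ.erase j, (u k - q α (u k))) /
          (w j (u k) * ∏ α ∈ univ.erase j, (q j (u k) - q α (u k)))))) (u k) := by
    have := HasDerivAt.fun_finsetProd (u := (univ : Finset (Fin g)))
      (f := fun α t => u n - q α t)
      (f' := fun j => 0 - (-(1 / 4) * c * d * (∏ α ∈ univ.erase j, (u k - q α (u k))) /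
          (w j (u k) * ∏ α ∈ univ.erase j, (q j (u k) - q α (u k))))) (x := u k)
      (fun j _ => (hasDerivAt_const (u k) (u n)).sub (hdq j))
    simpa [smul_eq_mul] using this
  have hmain := ((hdΩ.const_mul ((1:ℂ) / 4)).mul hdf).mul hP
  refine hmain.congr_deriv (Eq.symm ?_)
  rw [Finset.mul_sum]
  set a := Ωn (u k) with ha
  set b := fn (u k) with hb
  set Pn := ∏ α, (u n - q α (u k)) with hPn
  set Pk := ∏ α, (u k - q α (u k)) with hPk
  have hsplit :
      (((1:ℂ) / 4 * c * d * Pk) *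
          (((1:ℂ) / 4 * a * b * Pn) *
            ((∑ j, 1 / (w j (u k) * (u n - q j (u k)) * ∏ β ∈ univ.erase j, (q j (u k) - q β (u k))))
              - Ωinf / 2) + 1 / 2) -
        ((1:ℂ) / 4 * a * b * Pn) *
          (((1:ℂ) / 4 * c * d * Pk) *
            ((∑ j, 1 / (w j (u k) * (u k - q j (u k)) * ∏ β ∈ univ.erase j, (q j (u k) - q β (u k))))
              - Ωinf / 2) + 1 / 2)) / (u k - u n)
      = (∑ j, (((1:ℂ) / 4 * c * d * Pk) * (((1:ℂ) / 4 * a * b * Pn) *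
            (1 / (w j (u k) * (u n - q j (u k)) * ∏ β ∈ univ.erase j, (q j (u k) - q β (u k)))))
          - ((1:ℂ) / 4 * a * b * Pn) * (((1:ℂ) / 4 * c * d * Pk) *
            (1 / (w j (u k) * (u k - q j (u k)) * ∏ β ∈ univ.erase j, (q j (u k) - q β (u k))))))
            / (u k - u n))
        + (((1:ℂ) / 4 * c * d * Pk) - ((1:ℂ) / 4 * a * b * Pn)) / 2 / (u k - u n) := by
    rw [← Finset.sum_div, Finset.sum_sub_distrib, ← Finset.mul_sum, ← Finset.mul_sum,
      ← Finset.mul_sum, ← Finset.mul_sum]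
    ring
  rw [hsplit]
  have hrest : (((1:ℂ) / 4 * c * d * Pk) - ((1:ℂ) / 4 * a * b * Pn)) / 2 / (u k - u n)
      = (1 / 4 * ((1 / 2) * (c / (u k - u n)) * (d / b) * Pk / Pn) * b
          + 1 / 4 * a * ((1 / 2) * b / (u n - u k))) * Pn := by
    have h := key_rest a b c d Pk Pn (u k - u n) hfn hPn0 hkn'
    rw [show -(u k - u n) = u n - u k by ring] at h
    exact h
  have hterm : ∀ j : Fin g,
      (((1:ℂ) / 4 * c * d * Pk) * (((1:ℂ) / 4 * a * b * Pn) *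
            (1 / (w j (u k) * (u n - q j (u k)) * ∏ β ∈ univ.erase j, (q j (u k) - q β (u k)))))
          - ((1:ℂ) / 4 * a * b * Pn) * (((1:ℂ) / 4 * c * d * Pk) *
            (1 / (w j (u k) * (u k - q j (u k)) * ∏ β ∈ univ.erase j, (q j (u k) - q β (u k))))))
            / (u k - u n)
      = 1 / 4 * a * b *
          ((∏ α ∈ univ.erase j, (u n - q α (u k))) *
            (0 - (-(1 / 4) * c * d * (∏ α ∈ univ.erase j, (u k - q α (u k))) /
              (w j (u k) * ∏ α ∈ univ.erase j, (q j (u k) - q α (u k)))))) := by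
    intro j
    have hPn' : Pn = (u n - q j (u k)) * ∏ α ∈ univ.erase j, (u n - q α (u k)) := by
      rw [hPn]; exact (Finset.mul_prod_erase univ _ (mem_univ j)).symm
    have hPk' : Pk = (u k - q j (u k)) * ∏ α ∈ univ.erase j, (u k - q α (u k)) := by
      rw [hPk]; exact (Finset.mul_prod_erase univ _ (mem_univ j)).symm
    have h := key_term a b c d (w j (u k)) (∏ β ∈ univ.erase j, (q j (u k) - q β (u k)))
      (∏ α ∈ univ.erase j, (u n - q α (u k))) (∏ α ∈ univ.erase j, (u k - q α (u k)))
      (u n - q j (u k)) (u k - q j (u k)) (hw j) (hD j) (hxn j) (hxk j)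
      (by rw [show (u k - q j (u k)) - (u n - q j (u k)) = u k - u n by ring]; exact hkn')
    rw [show (u k - q j (u k)) - (u n - q j (u k)) = u k - u n by ring] at h
    rw [hPn', hPk']
    convert h using 2 <;> ring
  rw [hrest, Finset.sum_congr rfl fun j _ => hterm j, add_comm]
  rfl
end

section
/- Let x, y₀, r₀, r₁, r_x, p_Q ∈ ℂ satisfy x ∉ {0,1}, y₀ ∉ {0,1,x}, r₀ − r_x = p_Q·x·(y₀ − 1), r₁ − r_x = p_Q·y₀·(x − 1), and p_Q²·y₀(y₀ − 1)(y₀ − x) = 1. Define β₁ := −(y₀/x)·r₀², β₂ := ((y₀ − 1)/(x − 1))·r₁², β₃ := ((x − y₀)/(x(x − 1)))·r_x². Then β₁ + β₂ + β₃ = −1; consequently the (1,1)-entries A₁₁^{(i)} = −1/4 − βᵢ/2 of the residue matrices satisfy A₁₁^{(1)} + A₁₁^{(2)} + A₁₁^{(3)} = −1/4. -/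
/-- With `β₁ = −(y₀/x)·r₀²`, `β₂ = ((y₀−1)/(x−1))·r₁²`, `β₃ = ((x−y₀)/(x(x−1)))·r_x²`,
one has `β₁ + β₂ + β₃ = −1`; consequently the `(1,1)`-entries `A₁₁^(i) = −1/4 − βᵢ/2` of
the residue matrices satisfy `A₁₁^{(1)} + A₁₁^{(2)} + A₁₁^{(3)} = −1/4`. -/
theorem sum_beta_elliptic (x y₀ r₀ r₁ rx pQ : ℂ)
    (hx0 : x ≠ 0) (hx1 : x ≠ 1)
    (hy0 : y₀ ≠ 0) (hy1 : y₀ ≠ 1) (hyx : y₀ ≠ x)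
    (h1 : r₀ - rx = pQ * x * (y₀ - 1))
    (h2 : r₁ - rx = pQ * y₀ * (x - 1))
    (hpQ : pQ ^ 2 * (y₀ * (y₀ - 1) * (y₀ - x)) = 1) :
    (-(y₀ / x) * r₀ ^ 2 + (y₀ - 1) / (x - 1) * r₁ ^ 2
        + (x - y₀) / (x * (x - 1)) * rx ^ 2 = -1) ∧
      ((-1 / 4 - (-(y₀ / x) * r₀ ^ 2) / 2)
          + (-1 / 4 - ((y₀ - 1) / (x - 1) * r₁ ^ 2) / 2)
          + (-1 / 4 - ((x - y₀) / (x * (x - 1)) * rx ^ 2) / 2) = -1 / 4) := by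
  have hx1' : x - 1 ≠ 0 := sub_ne_zero.mpr hx1
  have key : -(y₀ / x) * r₀ ^ 2 + (y₀ - 1) / (x - 1) * r₁ ^ 2
      + (x - y₀) / (x * (x - 1)) * rx ^ 2 = -1 := by
    field_simp
    linear_combination (-(y₀*(x-1))*(r₀+rx+pQ*x*(y₀-1)))*h1
      + (x*(y₀-1)*(r₁+rx+pQ*y₀*(x-1)))*h2 + (-(x*(x-1)))*hpQ
  exact ⟨key, by linear_combination -key/2⟩
end

section
/- Let x, y₀, r₀, r₁, r_x, p_Q ∈ ℂ satisfy x ∉ {0,1}, y₀ ∉ {0,1,x}, r₀ − r_x = p_Q·x·(y₀ − 1), r₁ − r_x = p_Q·y₀·(x − 1), and p_Q²·y₀(y₀ − 1)(y₀ − x) = 1. Define β₁ := −(y₀/x)·r₀², β₂ := ((y₀ − 1)/(x − 1))·r₁², β₃ := ((x − y₀)/(x(x − 1)))·r_x². Then r₀·(1 + β₁) + r₁·(1 + β₂) + r_x·(1 + β₃) = 0; consequently, if r₀, r₁, r_x are all nonzero, the (2,1)-entries A₂₁^{(i)} = −(βᵢ + βᵢ²)/(4·A₁₂^{(i)}) of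 the residue matrices, with A₁₂^{(1)} = −(y₀/x)·r₀, A₁₂^{(2)} = ((y₀−1)/(x−1))·r₁, A₁₂^{(3)} = ((x−y₀)/(x(x−1)))·r_x, satisfy A₂₁^{(1)} + A₂₁^{(2)} + A₂₁^{(3)} = 0. -/
/-- With `β₁ = −(y₀/x)·r₀²`, `β₂ = ((y₀−1)/(x−1))·r₁²`, `β₃ = ((x−y₀)/(x(x−1)))·r_x²`,
one has `r₀·(1 + β₁) + r₁·(1 + β₂) + r_x·(1 + β₃) = 0`; consequently, if `r₀, r₁, r_x` are
all nonzero, the `(2,1)`-entries `A₂₁^(i) = −(βᵢ + βᵢ²)/(4·A₁₂^(i))` of the residue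
matrices, with `A₁₂^{(1)} = −(y₀/x)·r₀`, `A₁₂^{(2)} = ((y₀−1)/(x−1))·r₁`,
`A₁₂^{(3)} = ((x−y₀)/(x(x−1)))·r_x`, sum to zero. -/
theorem sum_A21_entries_elliptic (x y₀ r₀ r₁ rx pQ : ℂ)
    (hx0 : x ≠ 0) (hx1 : x ≠ 1)
    (hy0 : y₀ ≠ 0) (hy1 : y₀ ≠ 1) (hyx : y₀ ≠ x)
    (h1 : r₀ - rx = pQ * x * (y₀ - 1))
    (h2 : r₁ - rx = pQ * y₀ * (x - 1))
    (hpQ : pQ ^ 2 * (y₀ * (y₀ - 1) * (y₀ - x)) = 1) :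
    (r₀ * (1 + -(y₀ / x) * r₀ ^ 2) + r₁ * (1 + (y₀ - 1) / (x - 1) * r₁ ^ 2)
        + rx * (1 + (x - y₀) / (x * (x - 1)) * rx ^ 2) = 0) ∧
      (r₀ ≠ 0 → r₁ ≠ 0 → rx ≠ 0 →
        -((-(y₀ / x) * r₀ ^ 2) + (-(y₀ / x) * r₀ ^ 2) ^ 2) / (4 * (-(y₀ / x) * r₀))
          + -(((y₀ - 1) / (x - 1) * r₁ ^ 2) + ((y₀ - 1) / (x - 1) * r₁ ^ 2) ^ 2) /
              (4 * ((y₀ - 1) / (x - 1) * r₁))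
          + -(((x - y₀) / (x * (x - 1)) * rx ^ 2)
                + ((x - y₀) / (x * (x - 1)) * rx ^ 2) ^ 2) /
              (4 * ((x - y₀) / (x * (x - 1)) * rx)) = 0) := by
  have hx1' : x - 1 ≠ 0 := sub_ne_zero.mpr hx1
  have hy1' : y₀ - 1 ≠ 0 := sub_ne_zero.mpr hy1
  have hxy : x - y₀ ≠ 0 := sub_ne_zero.mpr (Ne.symm hyx)
  have hr0 : r₀ = rx + pQ * x * (y₀ - 1) := by linear_combination h1
  have hr1 : r₁ = rx + pQ * y₀ * (x - 1) := by linear_combination h2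
  subst hr0 hr1
  have key : (rx + pQ * x * (y₀ - 1)) * (1 + -(y₀ / x) * (rx + pQ * x * (y₀ - 1)) ^ 2)
      + (rx + pQ * y₀ * (x - 1)) * (1 + (y₀ - 1) / (x - 1) * (rx + pQ * y₀ * (x - 1)) ^ 2)
      + rx * (1 + (x - y₀) / (x * (x - 1)) * rx ^ 2) = 0 := by
    field_simp
    linear_combination (3*x*rx - 3*x^2*rx + pQ*(-x*y₀ - x^2 + 3*x^2*y₀ + x^3 - 2*x^3*y₀)) * hpQ
  refine ⟨key, fun h0 h1' hx' => ?_⟩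
  have e1 : -((-(y₀ / x) * (rx + pQ * x * (y₀ - 1)) ^ 2)
      + (-(y₀ / x) * (rx + pQ * x * (y₀ - 1)) ^ 2) ^ 2)
      / (4 * (-(y₀ / x) * (rx + pQ * x * (y₀ - 1))))
      = -(rx + pQ * x * (y₀ - 1)) * (1 + -(y₀ / x) * (rx + pQ * x * (y₀ - 1)) ^ 2) / 4 := by
    rw [div_eq_div_iff] <;> [ring; skip; skip]
    · intro h; apply h0
      rcases mul_eq_zero.mp h with h | h
      · exact absurd h (by norm_num)
      rcases mul_eq_zero.mp h with h | h
      · exact absurd h (by simp [div_eq_zero_iff, hx0, hy0])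
      · exact h
    · norm_num
  have e2 : -(((y₀ - 1) / (x - 1) * (rx + pQ * y₀ * (x - 1)) ^ 2)
      + ((y₀ - 1) / (x - 1) * (rx + pQ * y₀ * (x - 1)) ^ 2) ^ 2)
      / (4 * ((y₀ - 1) / (x - 1) * (rx + pQ * y₀ * (x - 1))))
      = -(rx + pQ * y₀ * (x - 1)) * (1 + (y₀ - 1) / (x - 1) * (rx + pQ * y₀ * (x - 1)) ^ 2) / 4 := by
    rw [div_eq_div_iff] <;> [ring; skip; skip]
    · intro h; apply h1'
      rcases mul_eq_zero.mp h with h | h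
      · exact absurd h (by norm_num)
      rcases mul_eq_zero.mp h with h | h
      · exact absurd h (by simp [div_eq_zero_iff, hx1', hy1'])
      · exact h
    · norm_num
  have e3 : -(((x - y₀) / (x * (x - 1)) * rx ^ 2)
      + ((x - y₀) / (x * (x - 1)) * rx ^ 2) ^ 2)
      / (4 * ((x - y₀) / (x * (x - 1)) * rx))
      = -rx * (1 + (x - y₀) / (x * (x - 1)) * rx ^ 2) / 4 := by
    rw [div_eq_div_iff] <;> [ring; skip; skip]
    · intro h; apply hx'
      rcases mul_eq_zero.mp h with h | h
      · exact absurd h (by norm_num)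
      rcases mul_eq_zero.mp h with h | h
      · exact absurd h (by simp [div_eq_zero_iff, hx0, hx1', hxy])
      · exact h
    · norm_num
  rw [e1, e2, e3]
  linear_combination (-1/4 : ℂ) * key
end
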